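/- Let H be a real inner product space, let w_{d,1}, …, w_{d,K} and w_{o,1}, …, w_{o,K} be vectors in H with ‖w_{d,k} − w_{o,k}‖ ≤ Δ_k for each k, and let s_1, …, s_n ∈ H with ‖s_j‖ ≤ 1 and labels l_1, …, l_n ∈ ℝ. Then 1 − (1/n)·Σ_{j=1}^n |⟨(1/K)·Σ_{k=1}^K w_{d,k}, s_j⟩ − l_j| ≥ (1 − (1/n)·Σ_{j=1}^n |⟨(1/K)·Σ_{k=1}^K w_{o,k}, s_j⟩ − l_j|) − (1/K)·Σ_{k=1}^K Δ_k. In words: the model utility computed from the protected (distorted) parameters is at least the utility computed from the original parameters minus the average distortion extent. -/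
import Mathlib


open scoped RealInnerProductSpace

theorem stmt13 {H : Type*} [NormedAddCommGroup H] [InnerProductSpace ℝ H]
    (K n : ℕ) (hK : 0 < K) (hn : 0 < n)
    (Δ : Fin K → ℝ) (hΔ : ∀ k, 0 ≤ Δ k)
    (wd wo : Fin K → H) (hw : ∀ k, ‖wd k - wo k‖ ≤ Δ k)
    (s : Fin n → H) (hs : ∀ j, ‖s j‖ ≤ 1) (l : Fin n → ℝ) :
    1 - (1 / (n : ℝ)) * ∑ j, |⟪(1 / (K : ℝ)) • ∑ k, wd k, s j⟫ - l j| ≥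
      (1 - (1 / (n : ℝ)) * ∑ j, |⟪(1 / (K : ℝ)) • ∑ k, wo k, s j⟫ - l j|)
        - (1 / (K : ℝ)) * ∑ k, Δ k := by
  set D : ℝ := (1 / (K : ℝ)) * ∑ k, Δ k with hD
  have hKpos : (0 : ℝ) < K := by exact_mod_cast hK
  have hnpos : (0 : ℝ) < n := by exact_mod_cast hn
  have key : ∀ j, |⟪(1 / (K : ℝ)) • ∑ k, wd k, s j⟫ - l j| ≤
      |⟪(1 / (K : ℝ)) • ∑ k, wo k, s j⟫ - l j| + D := by
    intro j
    have h1 : |⟪(1 / (K : ℝ)) • ∑ k, wd k, s j⟫ - l j| -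
        |⟪(1 / (K : ℝ)) • ∑ k, wo k, s j⟫ - l j| ≤
        |⟪(1 / (K : ℝ)) • (∑ k, wd k - ∑ k, wo k), s j⟫| := by
      have := abs_sub_abs_le_abs_sub (⟪(1 / (K : ℝ)) • ∑ k, wd k, s j⟫ - l j)
        (⟪(1 / (K : ℝ)) • ∑ k, wo k, s j⟫ - l j)
      calc _ ≤ |(⟪(1 / (K : ℝ)) • ∑ k, wd k, s j⟫ - l j) -
            (⟪(1 / (K : ℝ)) • ∑ k, wo k, s j⟫ - l j)| := this
        _ = _ := by
            congr 1
            rw [smul_sub, inner_sub_left]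
            ring
    have h2 : |⟪(1 / (K : ℝ)) • (∑ k, wd k - ∑ k, wo k), s j⟫| ≤ D := by
      calc |⟪(1 / (K : ℝ)) • (∑ k, wd k - ∑ k, wo k), s j⟫|
          ≤ ‖(1 / (K : ℝ)) • (∑ k, wd k - ∑ k, wo k)‖ * ‖s j‖ :=
            abs_real_inner_le_norm _ _
        _ ≤ ‖(1 / (K : ℝ)) • (∑ k, wd k - ∑ k, wo k)‖ * 1 := by
            apply mul_le_mul_of_nonneg_left (hs j) (norm_nonneg _)
        _ = (1 / (K : ℝ)) * ‖∑ k, (wd k - wo k)‖ := by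
            rw [mul_one, norm_smul, Finset.sum_sub_distrib]
            simp [abs_of_pos, hKpos, le_of_lt hKpos]
        _ ≤ (1 / (K : ℝ)) * ∑ k, ‖wd k - wo k‖ := by
            apply mul_le_mul_of_nonneg_left (norm_sum_le _ _)
            positivity
        _ ≤ D := by
            rw [hD]
            apply mul_le_mul_of_nonneg_left (Finset.sum_le_sum fun k _ => hw k)
            positivity
    linarith
  have hsum : ∑ j, |⟪(1 / (K : ℝ)) • ∑ k, wd k, s j⟫ - l j| ≤
      (∑ j, |⟪(1 / (K : ℝ)) • ∑ k, wo k, s j⟫ - l j|) + n * D := by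
    calc ∑ j, |⟪(1 / (K : ℝ)) • ∑ k, wd k, s j⟫ - l j|
        ≤ ∑ j, (|⟪(1 / (K : ℝ)) • ∑ k, wo k, s j⟫ - l j| + D) :=
          Finset.sum_le_sum fun j _ => key j
      _ = _ := by rw [Finset.sum_add_distrib]; simp [mul_comm]
  have : (1 / (n : ℝ)) * ∑ j, |⟪(1 / (K : ℝ)) • ∑ k, wd k, s j⟫ - l j| ≤
      (1 / (n : ℝ)) * ((∑ j, |⟪(1 / (K : ℝ)) • ∑ k, wo k, s j⟫ - l j|) + n * D) :=
    mul_le_mul_of_nonneg_left hsum (by positivity)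
  have hnD : (1 / (n : ℝ)) * ((n : ℝ) * D) = D := by field_simp
  rw [mul_add, hnD] at this
  linarith
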